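/- For all k ≥ 1 and h ≥ 3, π'(T_{k,h}) ≤ ⌈(h+1)k/2⌉. -/

import Mathlib

/-- A repetition: a nonempty sequence whose first half equals its second half. -/
def IsRepetition {α : Type*} (l : List α) : Prop := ∃ w : List α, w ≠ [] ∧ l = w ++ w

/-- An edge-coloring is nonrepetitive if no path carries a repetitive color sequence. -/
def NonrepEdgeColoring {V α : Type*} (G : SimpleGraph V) (c : Sym2 V → α) : Prop :=
  ∀ u v : V, ∀ p : G.Walk u v, p.IsPath → ¬ IsRepetition (p.edges.map c)

/-- The Thue chromatic index: minimum number of colors in a nonrepetitive edge-coloring. -/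
noncomputable def thueIdx {V : Type*} (G : SimpleGraph V) : ℕ :=
  sInf {n | ∃ c : Sym2 V → ℕ, (∀ e ∈ G.edgeSet, c e < n) ∧ NonrepEdgeColoring G c}

/-- The infinite `k`-ary tree: vertices are finite words over `Fin k` (the root is `[]`,
and the children of `v`, in left-to-right order, are `j :: v` for `j : Fin k`). -/
def kTree (k : ℕ) : SimpleGraph (List (Fin k)) :=
  SimpleGraph.fromRel (fun u v => ∃ j : Fin k, u = j :: v)

/-- The (1-based) position in the defining sequence of the color of the edge joining a
non-root vertex to its parent: the edges from the root get positions `1, …, k` left to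
right, and if the edge from `v` to its parent has position `i`, then the edges to the
children of `v` get positions `i + 1, …, i + k` left to right. -/
def edgeIdx {k : ℕ} : List (Fin k) → ℕ
  | [] => 0
  | j :: v => edgeIdx v + (j : ℕ) + 1

/-- The edge-coloring of the infinite `k`-ary tree derived from the 1-indexed sequence `S`. -/
def derivedColoring (k : ℕ) (S : ℕ → ℕ) : Sym2 (List (Fin k)) → ℕ :=
  Sym2.lift ⟨fun u v =>
    if v.length < u.length then S (edgeIdx u)
    else if u.length < v.length then S (edgeIdx v) else 0, by
      intro u v
      rcases lt_trichotomy u.length v.length with h | h | h <;>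
        (simp only []; split_ifs <;> first | rfl | omega)⟩

/- ===================== auxiliary material ===================== -/

lemma Thue.mod_cases3 {n a b : ℕ} (hab : a % n = b % n) (ha : a < 2*n) (hb : b < 2*n) :
    a = b ∨ a + n = b ∨ b + n = a := by
  rcases Nat.eq_zero_or_pos n with rfl | hn
  · omega
  rcases le_total a b with h | h
  · have hd : n ∣ b - a := (Nat.modEq_iff_dvd' h).mp hab
    rcases hd with ⟨q, hq⟩
    have hq2 : q < 2 := by
      by_contra hc
      push_neg at hc
      have : 2 * n ≤ n * q := by calc 2*n = n*2 := by ring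
                                        _ ≤ n*q := Nat.mul_le_mul_left n hc
      omega
    interval_cases q <;> omega
  · have hd : n ∣ a - b := (Nat.modEq_iff_dvd' h).mp hab.symm
    rcases hd with ⟨q, hq⟩
    have hq2 : q < 2 := by
      by_contra hc
      push_neg at hc
      have : 2 * n ≤ n * q := by calc 2*n = n*2 := by ring
                                        _ ≤ n*q := Nat.mul_le_mul_left n hc
      omega
    interval_cases q <;> omega

/-- The combinatorial core: a "valley sequence" colored by residues mod n is not a square. -/
lemma Thue.core (k h n m r : ℕ) (z d : ℕ → ℕ) (hk : 1 ≤ k) (hh : 3 ≤ h)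
    (hn : n = ((h+1)*k+1)/2)
    (hm : 1 ≤ m) (hr : r ≤ 2*m)
    (hd : ∀ i < 2*m, 1 ≤ d i ∧ d i ≤ h ∧ d i ≤ z i ∧ z i ≤ k * d i)
    (hdesc : ∀ i, i+1 < r → d i = d (i+1) + 1 ∧ z (i+1) < z i ∧ z i ≤ z (i+1) + k)
    (hasc : ∀ i, r ≤ i → i+1 < 2*m → d (i+1) = d i + 1 ∧ z i < z (i+1) ∧ z (i+1) ≤ z i + k)
    (hjunc : 1 ≤ r → r < 2*m → d r = d (r-1) ∧ z r ≠ z (r-1) ∧ z r < z (r-1) + k ∧ z (r-1) < z r + k)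
    (hmod : ∀ t < m, z t % n = z (t+m) % n) : False := by
  have hkh : k * h + k = (h+1) * k := by ring
  have hn2 : 2*n = (h+1)*k ∨ 2*n = (h+1)*k + 1 := by omega
  have hzb : ∀ i < 2*m, 1 ≤ z i ∧ z i ≤ k * h := by
    intro i hi
    obtain ⟨h1, h2, h3, h4⟩ := hd i hi
    exact ⟨by omega, h4.trans (Nat.mul_le_mul_left k h2)⟩
  have hzlt : ∀ i < 2*m, z i < 2*n := by
    intro i hi
    have := (hzb i hi).2
    omega
  have zD : ∀ t < m, z t = z (t+m) ∨ z t + n = z (t+m) ∨ z (t+m) + n = z t := by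
    intro t ht
    exact Thue.mod_cases3 (hmod t ht) (hzlt t (by omega)) (hzlt (t+m) (by omega))
  have stepB : ∀ i, i+1 < 2*m → z i ≠ z (i+1) ∧ z i ≤ z (i+1) + k ∧ z (i+1) ≤ z i + k := by
    intro i hi
    rcases lt_or_ge (i+1) r with h1 | h1
    · obtain ⟨_, h2, h3⟩ := hdesc i h1
      exact ⟨by omega, h3, by omega⟩
    rcases le_or_gt r i with h2 | h2
    · obtain ⟨_, h3, h4⟩ := hasc i h2 hi
      exact ⟨by omega, by omega, h4⟩
    · have hri : r = i + 1 := by omega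
      obtain ⟨_, h3, h4, h5⟩ := hjunc (by omega) (by omega)
      rw [hri] at h3 h4 h5
      simp only [Nat.add_sub_cancel] at h3 h4 h5
      exact ⟨fun e => h3 e.symm, by omega, by omega⟩
  have monoD : ∀ t i, i + t < r → z (i+t) + t ≤ z i := by
    intro t
    induction t with
    | zero => intro i _; simp
    | succ t ih =>
      intro i hi
      have h1 := (hdesc (i+t) (by omega)).2.1
      have h2 := ih i (by omega)
      have : i + (t+1) = (i+t) + 1 := by omega
      rw [this]
      omega
  have monoA : ∀ t i, r ≤ i → i + t < 2*m → z i + t ≤ z (i+t) := by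
    intro t
    induction t with
    | zero => intro i _ _; simp
    | succ t ih =>
      intro i hri hi
      have h1 := (hasc (i+t) (by omega) (by omega)).2.1
      have h2 := ih i hri (by omega)
      have : i + (t+1) = (i+t) + 1 := by omega
      rw [this]
      omega
  have depD : ∀ t i, i + t < r → d i = d (i+t) + t := by
    intro t
    induction t with
    | zero => intro i _; simp
    | succ t ih =>
      intro i hi
      have h1 := (hdesc (i+t) (by omega)).1
      have h2 := ih i (by omega)
      have he : i + (t+1) = (i+t) + 1 := by omega
      rw [he]
      omega
  have depA : ∀ t i, r ≤ i → i + t < 2*m → d (i+t) = d i + t := by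
    intro t
    induction t with
    | zero => intro i _ _; simp
    | succ t ih =>
      intro i hri hi
      have h1 := (hasc (i+t) (by omega) (by omega)).1
      have h2 := ih i hri (by omega)
      have he : i + (t+1) = (i+t) + 1 := by omega
      rw [he]
      omega
  have strad : ∀ t < m, z t = z (t+m) → t < r ∧ r ≤ t + m := by
    intro t ht he
    constructor
    · by_contra hc
      push_neg at hc
      have := monoA m t hc (by omega)
      omega
    · by_contra hc
      push_neg at hc
      have := monoD m t (by omega)
      omega
  have zeros : ∀ t t', t < t' → t' < m → z t = z (t+m) → z t' = z (t'+m) → False := by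
    intro t t' htt ht' he he'
    obtain ⟨h1, h2⟩ := strad t (by omega) he
    obtain ⟨h3, h4⟩ := strad t' ht' he'
    have m1 : z t' + (t' - t) ≤ z t := by
      have := monoD (t' - t) t (by omega)
      have he2 : t + (t' - t) = t' := by omega
      rwa [he2] at this
    have m2 : z (t+m) + (t' - t) ≤ z (t'+m) := by
      have := monoA (t' - t) (t+m) (by omega) (by omega)
      have he2 : t + m + (t' - t) = t' + m := by omega
      rwa [he2] at this
    omega
  rcases Nat.lt_or_ge m 2 with hm1 | hm2
  · have hm1 : m = 1 := by omega
    subst hm1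
    have h1 := stepB 0 (by omega)
    have h2 := zD 0 (by omega)
    have h3 := hzb 0 (by omega)
    have h4 := hzb 1 (by omega)
    norm_num at h1 h2
    omega
  rcases Nat.lt_or_ge h 4 with h3' | h4'
  · have hh3 : h = 3 := by omega
    subst hh3
    have hnk : n = 2*k := by omega
    have hrle : r ≤ 3 := by
      by_contra hc
      push_neg at hc
      have h1 := depD (r-1) 0 (by omega)
      have h2 := (hd 0 (by omega)).2.1
      have h3 := (hd (0 + (r-1)) (by omega)).1
      omega
    have hmle : m ≤ 3 := by
      rcases Nat.lt_or_ge r (2*m) with h1 | h1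
      · have h2 := depA (2*m - 1 - r) r (by omega) (by omega)
        have h3 := (hd (r + (2*m-1-r)) (by omega)).2.1
        have h4 := (hd r (by omega)).1
        omega
      · have h2 := depD (2*m-1) 0 (by omega)
        have h3 := (hd 0 (by omega)).2.1
        have h4 := (hd (0+(2*m-1)) (by omega)).1
        omega
    interval_cases m
    · have zD0 := zD 0 (by omega)
      have zD1 := zD 1 (by omega)
      simp only [zero_add] at zD0
      norm_num at zD0 zD1
      have hb0 := hzb 0 (by omega)
      have hb1 := hzb 1 (by omega)
      have hb2 := hzb 2 (by omega)
      have hb3 := hzb 3 (by omega)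
      interval_cases r
      · have s0 := hasc 0 (by omega) (by omega)
        have s1 := hasc 1 (by omega) (by omega)
        have s2 := hasc 2 (by omega) (by omega)
        norm_num at s0 s1 s2
        omega
      · have s0 := hjunc (by omega) (by omega)
        have s1 := hasc 1 (by omega) (by omega)
        have s2 := hasc 2 (by omega) (by omega)
        norm_num at s0 s1 s2
        omega
      · have s0 := hdesc 0 (by omega)
        have s1 := hjunc (by omega) (by omega)
        have s2 := hasc 2 (by omega) (by omega)
        norm_num at s0 s1 s2
        omega
      · have s0 := hdesc 0 (by omega)
        have s1 := hdesc 1 (by omega)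
        have s2 := hjunc (by omega) (by omega)
        norm_num at s0 s1 s2
        omega
    · have hr3 : r = 3 := by
        rcases Nat.lt_or_ge r 3 with h1 | h1
        · exfalso
          have h2 := depA (5 - r) r (by omega) (by omega)
          have h3 := (hd (r + (5-r)) (by omega)).2.1
          have h4 := (hd r (by omega)).1
          omega
        · omega
      subst hr3
      have zD0 := zD 0 (by omega)
      have zD1 := zD 1 (by omega)
      have zD2 := zD 2 (by omega)
      simp only [zero_add] at zD0
      norm_num at zD0 zD1 zD2
      have hdp0 := hd 0 (by omega)
      have hdp1 := hd 1 (by omega)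
      have hdp2 := hd 2 (by omega)
      have hdp3 := hd 3 (by omega)
      have hdp4 := hd 4 (by omega)
      have hdp5 := hd 5 (by omega)
      have s0 := hdesc 0 (by omega)
      have s1 := hdesc 1 (by omega)
      have sj := hjunc (by omega) (by omega)
      have s3 := hasc 3 (by omega) (by omega)
      have s4 := hasc 4 (by omega) (by omega)
      norm_num at s0 s1 sj s3 s4
      have hd2 : d 2 = 1 := by omega
      have hd3 : d 3 = 1 := by omega
      have hd1 : d 1 = 2 := by omega
      have hd4 : d 4 = 2 := by omega
      have hz2 : z 2 ≤ k * 1 := hd2 ▸ hdp2.2.2.2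
      have hz3 : z 3 ≤ k * 1 := hd3 ▸ hdp3.2.2.2
      have hz1 : z 1 ≤ k * 2 := hd1 ▸ hdp1.2.2.2
      have hz4 : z 4 ≤ k * 2 := hd4 ▸ hdp4.2.2.2
      norm_num at hz2 hz3 hz1 hz4
      have hb0 := hzb 0 (by omega)
      have hb5 := hzb 5 (by omega)
      omega
  · have hnk : 2*k + 1 ≤ n := by
      have h5k : 5*k ≤ (h+1)*k := Nat.mul_le_mul_right k (by omega)
      omega
    have Dconst : ∀ t < m, z (t+m) + z 0 = z t + z m := by
      intro t
      induction t with
      | zero => intro _; simp only [Nat.zero_add]; omega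
      | succ t ih =>
        intro ht
        have i1 := ih (by omega)
        have d1 := zD t (by omega)
        have d2 := zD (t+1) (by omega)
        have d0 := zD 0 (by omega)
        simp only [zero_add] at d0
        have s1 := stepB t (by omega)
        have s2 := stepB (t+m) (by omega)
        have he : t + 1 + m = t + m + 1 := by omega
        rw [he] at d2 ⊢
        omega
    have d0 := zD 0 (by omega)
    simp only [zero_add] at d0
    rcases d0 with d0 | d0 | d0
    · have i1 := Dconst 1 (by omega)
      exact zeros 0 1 (by omega) (by omega) (by rw [Nat.zero_add]; exact d0) (by omega)
    · have i1 := Dconst (m-1) (by omega)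
      have d1 := zD (m-1) (by omega)
      have s1 := stepB (m-1) (by omega)
      rw [show m - 1 + 1 = m from by omega] at s1
      have hb0 := hzb 0 (by omega)
      have hbl := hzb (m-1+m) (by omega)
      have hbm1 := hzb (m-1) (by omega)
      omega
    · have i1 := Dconst (m-1) (by omega)
      have d1 := zD (m-1) (by omega)
      have s1 := stepB (m-1) (by omega)
      rw [show m - 1 + 1 = m from by omega] at s1
      have hb0 := hzb 0 (by omega)
      have hbl := hzb (m-1+m) (by omega)
      have hbm1 := hzb (m-1) (by omega)
      omega

lemma Thue.edgeIdx_le_mul {k : ℕ} : ∀ v : List (Fin k), edgeIdx v ≤ k * v.length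
  | [] => by simp [edgeIdx]
  | j :: v => by
      have h1 := Thue.edgeIdx_le_mul v
      have h2 : (j : ℕ) < k := j.isLt
      have h3 : k * (v.length + 1) = k * v.length + k := by ring
      simp only [edgeIdx, List.length_cons, h3]
      omega

lemma Thue.length_le_edgeIdx {k : ℕ} : ∀ v : List (Fin k), v.length ≤ edgeIdx v
  | [] => by simp [edgeIdx]
  | j :: v => by
      have h1 := Thue.length_le_edgeIdx v
      simp only [edgeIdx, List.length_cons]
      omega

/-- The color word along a list of vertices. -/
def Thue.pc {k : ℕ} (S : ℕ → ℕ) : List (List (Fin k)) → List ℕ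
  | a :: b :: t =>
      (if b.length < a.length then S (edgeIdx a)
       else if a.length < b.length then S (edgeIdx b) else 0) :: Thue.pc S (b :: t)
  | _ => []

lemma Thue.pc_length {k : ℕ} (S : ℕ → ℕ) :
    ∀ (L : List (List (Fin k))) (a : List (Fin k)), (Thue.pc S (a :: L)).length = L.length
  | [], a => rfl
  | b :: t, a => by
      simp only [Thue.pc, List.length_cons, Thue.pc_length S t b]

lemma Thue.pc_getD {k : ℕ} (S : ℕ → ℕ) :
    ∀ (L : List (List (Fin k))) (i : ℕ), i + 1 < L.length →
      (Thue.pc S L).getD i 0 =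
        (if (L.getD (i+1) []).length < (L.getD i []).length then S (edgeIdx (L.getD i []))
         else if (L.getD i []).length < (L.getD (i+1) []).length then S (edgeIdx (L.getD (i+1) []))
         else 0)
  | [], i, hi => by simp at hi
  | [a], i, hi => by simp at hi
  | a :: b :: t, 0, hi => by simp [Thue.pc]
  | a :: b :: t, (i+1), hi => by
      have ih := Thue.pc_getD S (b :: t) i (by simpa using hi)
      simpa [Thue.pc, List.getD_cons_succ] using ih


/-- For all `k ≥ 1` and `h ≥ 3`, the complete `k`-ary tree of height `h` satisfies
`π'(T_{k,h}) ≤ ⌈(h+1)k/2⌉`. -/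
theorem stmt19 (k h : ℕ) (hk : 1 ≤ k) (hh : 3 ≤ h) :
    thueIdx ((kTree k).induce {l : List (Fin k) | l.length ≤ h}) ≤
      ((h + 1) * k + 1) / 2 := by
  apply Nat.sInf_le
  have hn0 : 0 < ((h + 1) * k + 1) / 2 := by
    have : 4 * 1 ≤ (h+1) * k := Nat.mul_le_mul (by omega) hk
    omega
  refine ⟨fun e => derivedColoring k (fun i => (i - 1) % (((h + 1) * k + 1) / 2))
      (Sym2.map Subtype.val e), ?_, ?_⟩
  · intro e _
    induction e with
    | _ a b =>
      have hv : derivedColoring k (fun i => (i - 1) % (((h + 1) * k + 1) / 2))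
          (Sym2.map Subtype.val s(a, b)) =
          (if (b : List (Fin k)).length < (a : List (Fin k)).length then
              (edgeIdx (a : List (Fin k)) - 1) % (((h + 1) * k + 1) / 2)
           else if (a : List (Fin k)).length < (b : List (Fin k)).length then
              (edgeIdx (b : List (Fin k)) - 1) % (((h + 1) * k + 1) / 2)
           else 0) := by
        simp [derivedColoring, Sym2.map_pair_eq, Sym2.lift_mk]
      show derivedColoring k (fun i => (i - 1) % (((h + 1) * k + 1) / 2))
          (Sym2.map Subtype.val s(a, b)) < ((h + 1) * k + 1) / 2
      rw [hv]
      split_ifs <;> first | exact Nat.mod_lt _ hn0 | exact hn0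
  · intro u v p hp hrep
    obtain ⟨w, hw0, hweq⟩ := hrep
    set n : ℕ := ((h + 1) * k + 1) / 2 with hn
    set S : ℕ → ℕ := fun i => (i - 1) % n with hS
    -- the underlying vertex list
    set L : List (List (Fin k)) := p.support.map Subtype.val with hL
    have walkEdges : ∀ (a b : ↥{l : List (Fin k) | l.length ≤ h})
        (q : ((kTree k).induce {l : List (Fin k) | l.length ≤ h}).Walk a b),
        q.edges.map (fun e => derivedColoring k S (Sym2.map Subtype.val e)) =
          Thue.pc S (q.support.map Subtype.val) := by
      intro a b q
      induction q with
      | nil => rfl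
      | @cons x y zz hxy q ih =>
        rw [SimpleGraph.Walk.edges_cons, List.map_cons, SimpleGraph.Walk.support_cons,
          List.map_cons, ih, q.support_eq_cons, List.map_cons]
        rfl
    have hpcL : Thue.pc S L = w ++ w := by rw [hL, ← walkEdges u v p, hweq]
    set m := w.length with hm
    have hm1 : 1 ≤ m := by
      rcases w with _ | ⟨a, t⟩
      · exact absurd rfl hw0
      · simp [hm]
    have hLlen : L.length = 2 * m + 1 := by
      have h1 : L = u.val :: (p.support.tail.map Subtype.val) := by
        rw [hL]
        conv_lhs => rw [p.support_eq_cons]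
        rw [List.map_cons]
      have h2 : (Thue.pc S L).length = (p.support.tail.map Subtype.val).length := by
        rw [h1]; exact Thue.pc_length S _ _
      have h3 : (Thue.pc S L).length = 2 * m := by
        rw [hpcL]; simp [hm]; omega
      rw [h1]
      simp only [List.length_cons]
      omega
    set V : ℕ → List (Fin k) := fun i => L.getD i [] with hV
    have hchain : List.Chain' (kTree k).Adj L := by
      have h1 := p.isChain_adj_support
      exact List.isChain_map_of_isChain Subtype.val (fun a b hab => by simpa using hab) h1
    have hadj : ∀ i, i + 1 < L.length →
        (∃ j : Fin k, V i = j :: V (i+1)) ∨ (∃ j : Fin k, V (i+1) = j :: V i) := by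
      intro i hi
      have h1 := List.isChain_iff_getElem.mp hchain i (by omega)
      rw [kTree, SimpleGraph.fromRel_adj] at h1
      have e1 : V i = L.get ⟨i, by omega⟩ := List.getD_eq_getElem _ _ (by omega)
      have e2 : V (i+1) = L.get ⟨i+1, by omega⟩ := List.getD_eq_getElem _ _ (by omega)
      rw [e1, e2]
      exact h1.2
    have hnd : L.Nodup := hp.support_nodup.map Subtype.val_injective
    have hne : ∀ i j, i < j → j < L.length → V i ≠ V j := by
      intro i j hij hj
      show L.getD i [] ≠ L.getD j []
      rw [List.getD_eq_getElem _ _ (by omega), List.getD_eq_getElem _ _ (by omega)]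
      exact hnd.getElem_inj_iff.not.mpr (by omega)
    have hlen : ∀ i, i < L.length → (V i).length ≤ h := by
      intro i hi
      have h1 : V i ∈ L := by
        show L.getD i [] ∈ L
        rw [List.getD_eq_getElem _ _ hi]
        exact List.getElem_mem _
      rw [hL] at h1
      obtain ⟨x, _, hx⟩ := List.mem_map.mp h1
      rw [← hx]
      exact x.property
    -- find the turning point r
    have hexr : ∃ r, r ≤ 2*m ∧ (∀ i, i < r → ∃ j : Fin k, V i = j :: V (i+1)) ∧
        (∀ i, r ≤ i → i < 2*m → ∃ j : Fin k, V (i+1) = j :: V i) := by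
      have noDownUp : ∀ i, i + 1 < 2*m → (∃ j : Fin k, V (i+1) = j :: V i) →
          (∃ j : Fin k, V (i+2) = j :: V (i+1)) := by
        intro i hi hd
        rcases hadj (i+1) (by omega) with h1 | h1
        · exfalso
          obtain ⟨j, hj⟩ := hd
          obtain ⟨j', hj'⟩ := h1
          rw [show i + 1 + 1 = i + 2 from rfl] at hj'
          rw [hj'] at hj
          have := (List.cons.injEq _ _ _ _).mp hj
          exact hne i (i+2) (by omega) (by omega) this.2.symm
        · rw [show i + 1 + 1 = i + 2 from rfl] at h1
          exact h1
      by_cases hex : ∃ i, i < 2*m ∧ ∃ j : Fin k, V (i+1) = j :: V i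
      · refine ⟨Nat.find hex, ?_, ?_, ?_⟩
        · have h1 := Nat.find_spec hex
          omega
        · intro i hi
          have h1 : ¬(i < 2*m ∧ ∃ j : Fin k, V (i+1) = j :: V i) := Nat.find_min hex hi
          have h2 : i < 2*m := by
            have := Nat.find_spec hex
            omega
          rcases hadj i (by omega) with h3 | h3
          · exact h3
          · exact absurd ⟨h2, h3⟩ h1
        · intro i hri hi
          have key : ∀ t, Nat.find hex + t < 2*m →
              ∃ j : Fin k, V (Nat.find hex + t + 1) = j :: V (Nat.find hex + t) := by
            intro t
            induction t with
            | zero =>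
              intro _
              simpa using (Nat.find_spec hex).2
            | succ t ih =>
              intro ht
              have h1 := ih (by omega)
              have h2 := noDownUp (Nat.find hex + t) (by omega) h1
              rw [show Nat.find hex + t + 2 = Nat.find hex + (t+1) + 1 from by omega,
                show Nat.find hex + t + 1 = Nat.find hex + (t+1) from by omega] at h2
              exact h2
          have h1 := key (i - Nat.find hex) (by omega)
          rw [show Nat.find hex + (i - Nat.find hex) = i from by omega] at h1
          exact h1
      · refine ⟨2*m, le_rfl, ?_, ?_⟩
        · intro i hi
          rcases hadj i (by omega) with h1 | h1
          · exact h1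
          · exact absurd ⟨i, hi, h1⟩ hex
        · intro i h1 h2
          omega
    obtain ⟨r, hrle, hrup, hrdown⟩ := hexr
    -- the index and depth sequences
    set z : ℕ → ℕ := fun i => max (edgeIdx (V i)) (edgeIdx (V (i+1))) with hz
    set d : ℕ → ℕ := fun i => max (V i).length (V (i+1)).length with hdd
    have coreHd : ∀ i, i < 2*m → 1 ≤ d i ∧ d i ≤ h ∧ d i ≤ z i ∧ z i ≤ k * d i := by
      intro i hi
      have hb1 := Thue.edgeIdx_le_mul (V i)
      have hb2 := Thue.edgeIdx_le_mul (V (i+1))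
      have hb3 := Thue.length_le_edgeIdx (V i)
      have hb4 := Thue.length_le_edgeIdx (V (i+1))
      have hl1 := hlen i (by omega)
      have hl2 := hlen (i+1) (by omega)
      have hmul : ∀ x y : ℕ, x ≤ y → k * x ≤ k * y := fun x y hxy => Nat.mul_le_mul_left k hxy
      rcases hadj i (by omega) with ⟨j, hj⟩ | ⟨j, hj⟩
      · have e1 : edgeIdx (V i) = edgeIdx (V (i+1)) + (j:ℕ) + 1 := by rw [hj]; rfl
        have e2 : (V i).length = (V (i+1)).length + 1 := by rw [hj]; rfl
        simp only [hz, hdd]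
        refine ⟨by omega, by omega, by omega, ?_⟩
        have ej : ((V i).length ⊔ (V (i+1)).length) = (V i).length := by omega
        rw [ej]
        omega
      · have e1 : edgeIdx (V (i+1)) = edgeIdx (V i) + (j:ℕ) + 1 := by rw [hj]; rfl
        have e2 : (V (i+1)).length = (V i).length + 1 := by rw [hj]; rfl
        simp only [hz, hdd]
        refine ⟨by omega, by omega, by omega, ?_⟩
        have ej : ((V i).length ⊔ (V (i+1)).length) = (V (i+1)).length := by omega
        rw [ej]
        omega
    have coreHdesc : ∀ i, i+1 < r → d i = d (i+1) + 1 ∧ z (i+1) < z i ∧ z i ≤ z (i+1) + k := by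
      intro i hi
      obtain ⟨j, hj⟩ := hrup i (by omega)
      obtain ⟨j', hj'⟩ := hrup (i+1) (by omega)
      have e1 : edgeIdx (V i) = edgeIdx (V (i+1)) + (j:ℕ) + 1 := by rw [hj]; rfl
      have e2 : (V i).length = (V (i+1)).length + 1 := by rw [hj]; rfl
      have e3 : edgeIdx (V (i+1)) = edgeIdx (V (i+1+1)) + (j':ℕ) + 1 := by rw [hj']; rfl
      have e4 : (V (i+1)).length = (V (i+1+1)).length + 1 := by rw [hj']; rfl
      have h2 : (j:ℕ) < k := j.isLt
      have h3 : (j':ℕ) < k := j'.isLt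
      simp only [hz, hdd]
      omega
    have coreHasc : ∀ i, r ≤ i → i+1 < 2*m →
        d (i+1) = d i + 1 ∧ z i < z (i+1) ∧ z (i+1) ≤ z i + k := by
      intro i hri hi
      obtain ⟨j, hj⟩ := hrdown i hri (by omega)
      obtain ⟨j', hj'⟩ := hrdown (i+1) (by omega) (by omega)
      have e1 : edgeIdx (V (i+1)) = edgeIdx (V i) + (j:ℕ) + 1 := by rw [hj]; rfl
      have e2 : (V (i+1)).length = (V i).length + 1 := by rw [hj]; rfl
      have e3 : edgeIdx (V (i+1+1)) = edgeIdx (V (i+1)) + (j':ℕ) + 1 := by rw [hj']; rfl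
      have e4 : (V (i+1+1)).length = (V (i+1)).length + 1 := by rw [hj']; rfl
      have h2 : (j:ℕ) < k := j.isLt
      have h3 : (j':ℕ) < k := j'.isLt
      simp only [hz, hdd]
      omega
    have coreHjunc : 1 ≤ r → r < 2*m →
        d r = d (r-1) ∧ z r ≠ z (r-1) ∧ z r < z (r-1) + k ∧ z (r-1) < z r + k := by
      intro hr1 hr2
      obtain ⟨j, hj⟩ := hrup (r-1) (by omega)
      obtain ⟨j', hj'⟩ := hrdown r le_rfl hr2
      rw [show r - 1 + 1 = r from by omega] at hj
      have e1 : edgeIdx (V (r-1)) = edgeIdx (V r) + (j:ℕ) + 1 := by rw [hj]; rfl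
      have e2 : (V (r-1)).length = (V r).length + 1 := by rw [hj]; rfl
      have e3 : edgeIdx (V (r+1)) = edgeIdx (V r) + (j':ℕ) + 1 := by rw [hj']; rfl
      have e4 : (V (r+1)).length = (V r).length + 1 := by rw [hj']; rfl
      have h2 : (j:ℕ) < k := j.isLt
      have h3 : (j':ℕ) < k := j'.isLt
      have hVV : V (r-1) ≠ V (r+1) := hne (r-1) (r+1) (by omega) (by omega)
      have hjj : (j:ℕ) ≠ (j':ℕ) := by
        intro he
        apply hVV
        rw [hj, hj']
        congr 1
        exact Fin.ext he
      have er : r - 1 + 1 = r := by omega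
      simp only [hz, hdd, er]
      omega
    have coreHmod : ∀ t, t < m → z t % n = z (t+m) % n := by
      have colEq : ∀ t, t < 2*m → (Thue.pc S L).getD t 0 = S (z t) := by
        intro t ht
        have h1 := Thue.pc_getD S L t (by omega)
        have hgd : L.getD t [] = V t := rfl
        have hgd2 : L.getD (t+1) [] = V (t+1) := rfl
        rw [hgd, hgd2] at h1
        rcases hadj t (by omega) with ⟨j, hj⟩ | ⟨j, hj⟩
        · have e1 : edgeIdx (V t) = edgeIdx (V (t+1)) + (j:ℕ) + 1 := by rw [hj]; rfl
          have e2 : (V t).length = (V (t+1)).length + 1 := by rw [hj]; rfl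
          have e3 : z t = edgeIdx (V t) := by simp only [hz]; omega
          rw [h1, e3, if_pos (by omega)]
        · have e1 : edgeIdx (V (t+1)) = edgeIdx (V t) + (j:ℕ) + 1 := by rw [hj]; rfl
          have e2 : (V (t+1)).length = (V t).length + 1 := by rw [hj]; rfl
          have e3 : z t = edgeIdx (V (t+1)) := by simp only [hz]; omega
          rw [h1, e3, if_neg (by omega), if_pos (by omega)]
      intro t ht
      have c1 : S (z t) = S (z (t+m)) := by
        rw [← colEq t (by omega), ← colEq (t+m) (by omega), hpcL]
        have hwl : (w ++ w).length = 2*m := by simp [hm]; omega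
        rw [List.getD_eq_getElem _ _ (by omega), List.getD_eq_getElem _ _ (by omega)]
        rw [List.getElem_append_left (by omega), List.getElem_append_right (by omega)]
        congr 1
        omega
      have hz1 : 1 ≤ z t := by
        have := coreHd t (by omega)
        omega
      have hz2 : 1 ≤ z (t+m) := by
        have := coreHd (t+m) (by omega)
        omega
      have c2 : (z t - 1) % n = (z (t+m) - 1) % n := c1
      have c3 : (z t - 1) + 1 ≡ (z (t+m) - 1) + 1 [MOD n] := Nat.ModEq.add_right 1 c2
      rwa [Nat.sub_add_cancel hz1, Nat.sub_add_cancel hz2] at c3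
    exact Thue.core k h n m r z d hk hh hn hm1 hrle coreHd coreHdesc coreHasc coreHjunc coreHmod
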